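/- Let k ≥ 1 and let V ⊆ W_k be a ℚ-subspace containing the form s_{[2k]} = s_1 + ⋯ + s_{2k}, with dim V = 2k − 1. Then 𝒜(V) − dim V ≤ binom(2k,k) − 2k, with equality if and only if there is a set J ⊆ [2k] with #J = k and 1 ∈ J such that V = Span_ℚ({s_j − s_1 : j ∈ J} ∪ {s_j + s_1 : j ∈ [2k] \ J}). -/

import Mathlib

open scoped Classical

/-- The linear form `s_J = Σ_{j ∈ J} s_j` in the variables `s_1,…,s_{2k}`, viewed as a
vector of `ℚ^{2k}`. -/
noncomputable def sForm (k : ℕ) (J : Finset (Fin (2 * k))) : Fin (2 * k) → ℚ :=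
  fun i => if i ∈ J then 1 else 0

/-- `𝒜(V) := Σ_{∅ ≠ J ⊆ [2k], s_J ∈ V} (−1)^{#J}`. -/
noncomputable def formSum (k : ℕ) (V : Submodule ℚ (Fin (2 * k) → ℚ)) : ℤ :=
  ∑ J ∈ Finset.univ.filter
      (fun J : Finset (Fin (2 * k)) => J.Nonempty ∧ sForm k J ∈ V),
    (-1 : ℤ) ^ J.card

namespace FormSumAux

open Finset
open scoped symmDiff

noncomputable def wt {m : ℕ} (a : Fin m → ℚ) : (Fin m → ℚ) →ₗ[ℚ] ℚ :=
  ∑ i, a i • (LinearMap.proj i : (Fin m → ℚ) →ₗ[ℚ] ℚ)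

lemma wt_apply {m : ℕ} (a x : Fin m → ℚ) : wt a x = ∑ i, a i * x i := by
  simp [wt, smul_eq_mul, mul_comm]

lemma wt_sForm {k : ℕ} (a : Fin (2*k) → ℚ) (J : Finset (Fin (2*k))) :
    wt a (sForm k J) = ∑ i ∈ J, a i := by
  rw [wt_apply]
  simp only [sForm, mul_ite, mul_one, mul_zero]
  rw [Finset.sum_ite_mem, Finset.univ_inter]

noncomputable def zsum {m : ℕ} (a : Fin m → ℚ) : ℤ :=
  ∑ J ∈ Finset.univ.filter (fun J : Finset (Fin m) => ∑ i ∈ J, a i = 0), (-1 : ℤ) ^ J.card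

lemma formSum_ker (k : ℕ) (a : Fin (2*k) → ℚ) :
    formSum k (LinearMap.ker (wt a)) = zsum a - 1 := by
  have h1 : (Finset.univ.filter
      (fun J : Finset (Fin (2*k)) => J.Nonempty ∧ sForm k J ∈ LinearMap.ker (wt a)))
      = (Finset.univ.filter (fun J : Finset (Fin (2*k)) => ∑ i ∈ J, a i = 0)).erase ∅ := by
    ext J
    simp [LinearMap.mem_ker, wt_sForm, Finset.nonempty_iff_ne_empty, and_comm]
  have h2 : (∅ : Finset (Fin (2*k))) ∈
      Finset.univ.filter (fun J : Finset (Fin (2*k)) => ∑ i ∈ J, a i = 0) := by simp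
  rw [formSum, h1, Finset.sum_erase_eq_sub h2]
  simp [zsum]

lemma sum_symmDiff {m : ℕ} (a : Fin m → ℚ) (N J : Finset (Fin m)) :
    ∑ i ∈ J ∆ N, (if i ∈ N then -a i else a i) = ∑ i ∈ J, a i - ∑ i ∈ N, a i := by
  rw [symmDiff_def, Finset.sup_eq_union,
    Finset.sum_union (disjoint_sdiff_sdiff)]
  have h1 : ∑ i ∈ J \ N, (if i ∈ N then -a i else a i) = ∑ i ∈ J \ N, a i :=
    Finset.sum_congr rfl fun i hi => by simp [(Finset.mem_sdiff.1 hi).2]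
  have h2 : ∑ i ∈ N \ J, (if i ∈ N then -a i else a i) = -∑ i ∈ N \ J, a i := by
    rw [← Finset.sum_neg_distrib]
    exact Finset.sum_congr rfl fun i hi => by simp [(Finset.mem_sdiff.1 hi).1]
  have e1 : ∑ i ∈ J \ (J ∩ N), a i + ∑ i ∈ J ∩ N, a i = ∑ i ∈ J, a i :=
    Finset.sum_sdiff Finset.inter_subset_left
  have e2 : ∑ i ∈ N \ (N ∩ J), a i + ∑ i ∈ N ∩ J, a i = ∑ i ∈ N, a i :=
    Finset.sum_sdiff Finset.inter_subset_left
  rw [Finset.sdiff_inter_self_left] at e1 e2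
  rw [Finset.inter_comm] at e2
  rw [h1, h2]
  linarith

lemma card_symmDiff_id {m : ℕ} (J N : Finset (Fin m)) :
    J.card + N.card = (J ∆ N).card + 2 * (J ∩ N).card := by
  have h1 : (J ∆ N).card = (J \ N).card + (N \ J).card := by
    rw [symmDiff_def, Finset.sup_eq_union,
      Finset.card_union_of_disjoint (disjoint_sdiff_sdiff)]
  have h2 := Finset.card_sdiff_add_card_inter J N
  have h3 := Finset.card_sdiff_add_card_inter N J
  have h4 : (J ∩ N).card = (N ∩ J).card := by rw [Finset.inter_comm]
  omega

lemma neg_one_pow_symmDiff {m : ℕ} (J N : Finset (Fin m)) :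
    (-1 : ℤ) ^ J.card = (-1) ^ N.card * (-1) ^ (J ∆ N).card := by
  have hh : N.card + (J ∆ N).card + 2 * (J ∩ N).card = J.card + 2 * N.card := by
    have := card_symmDiff_id J N; omega
  calc (-1 : ℤ) ^ J.card = (-1) ^ J.card * ((-1) ^ 2) ^ N.card := by norm_num
    _ = (-1) ^ (J.card + 2 * N.card) := by rw [← pow_mul, ← pow_add]
    _ = (-1) ^ (N.card + (J ∆ N).card + 2 * (J ∩ N).card) := by rw [hh]
    _ = (-1) ^ (N.card + (J ∆ N).card) * ((-1) ^ 2) ^ ((J ∩ N).card) := by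
        rw [pow_add (-1 : ℤ) (N.card + (J ∆ N).card), pow_mul]
    _ = (-1) ^ N.card * (-1) ^ (J ∆ N).card := by rw [pow_add]; norm_num

lemma zsum_transfer {m : ℕ} (a : Fin m → ℚ) (N : Finset (Fin m)) :
    zsum a = (-1 : ℤ) ^ N.card *
      ∑ K ∈ Finset.univ.filter (fun K : Finset (Fin m) =>
        ∑ i ∈ K, (if i ∈ N then -a i else a i) = ∑ i ∈ N, (if i ∈ N then -a i else a i)),
      (-1 : ℤ) ^ K.card := by
  have hbN : ∑ i ∈ N, (if i ∈ N then -a i else a i) = -∑ i ∈ N, a i := by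
    rw [← Finset.sum_neg_distrib]
    exact Finset.sum_congr rfl fun i hi => by simp [hi]
  rw [zsum, Finset.mul_sum]
  refine Finset.sum_nbij' (fun J => J ∆ N) (fun K => K ∆ N) ?_ ?_ ?_ ?_ ?_
  · intro J hJ
    simp only [Finset.mem_filter, Finset.mem_univ, true_and] at hJ ⊢
    rw [sum_symmDiff, hbN, hJ]; ring
  · intro K hK
    simp only [Finset.mem_filter, Finset.mem_univ, true_and] at hK ⊢
    have := sum_symmDiff a N (K ∆ N)
    rw [symmDiff_symmDiff_cancel_right, hK, hbN] at this
    linarith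
  · intro J _; exact symmDiff_symmDiff_cancel_right N J
  · intro K _; exact symmDiff_symmDiff_cancel_right N K
  · intro J _; exact neg_one_pow_symmDiff J N
lemma choose_lt_succ {k r : ℕ} (h : r < k) :
    Nat.choose (2*k) r < Nat.choose (2*k) (r+1) := by
  have hpos : 0 < Nat.choose (2*k) r := Nat.choose_pos (by omega)
  have he := Nat.choose_succ_right_eq (2*k) r
  have hlt : Nat.choose (2*k) r * (r+1) < Nat.choose (2*k) r * (2*k - r) :=
    mul_lt_mul_of_pos_left (show r+1 < 2*k - r by omega) hpos
  rw [← he] at hlt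
  exact Nat.lt_of_mul_lt_mul_right hlt

lemma choose_lt_of_lt {k r s : ℕ} (hrs : r < s) (hs : s ≤ k) :
    Nat.choose (2*k) r < Nat.choose (2*k) s := by
  induction s with
  | zero => omega
  | succ n ih =>
    rcases Nat.lt_or_ge r n with h | h
    · exact (ih h (by omega)).trans (choose_lt_succ (by omega))
    · have : r = n := by omega
      subst this
      exact choose_lt_succ (by omega)

lemma choose_lt_middle {k r : ℕ} (h1 : r ≤ 2*k) (h2 : r ≠ k) :
    Nat.choose (2*k) r < Nat.choose (2*k) k := by
  rcases Nat.lt_or_ge r k with h | h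
  · exact choose_lt_of_lt h (le_refl k)
  · have hrk : k < r := by omega
    have hsym : Nat.choose (2*k) (2*k - r) = Nat.choose (2*k) r := Nat.choose_symm h1
    rw [← hsym]
    exact choose_lt_of_lt (by omega) (by omega)

lemma antichain_card_le {k : ℕ} (𝒜 : Finset (Finset (Fin (2*k))))
    (h : IsAntichain (· ⊆ ·) (𝒜 : Set (Finset (Fin (2*k))))) :
    𝒜.card ≤ Nat.choose (2*k) k := by
  have := IsAntichain.sperner h
  rwa [Fintype.card_fin, Nat.mul_div_cancel_left k (by norm_num)] at this

lemma antichain_eq_middle {k : ℕ} (𝒜 : Finset (Finset (Fin (2*k))))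
    (h : IsAntichain (· ⊆ ·) (𝒜 : Set (Finset (Fin (2*k)))))
    (hc : 𝒜.card = Nat.choose (2*k) k) :
    ∀ K ∈ 𝒜, K.card = k := by
  classical
  have hM0 : (0 : ℚ) < (Nat.choose (2*k) k : ℚ) := by
    exact_mod_cast Nat.choose_pos (by omega)
  have lym : ∑ r ∈ Finset.range (2*k+1), ((𝒜 # r).card : ℚ) / (Nat.choose (2*k) r) ≤ 1 := by
    have := Finset.sum_card_slice_div_choose_le_one (𝕜 := ℚ) h
    rwa [Fintype.card_fin] at this
  have hsum : ∑ r ∈ Finset.range (2*k+1), ((𝒜 # r).card : ℚ) = (Nat.choose (2*k) k : ℚ) := by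
    rw [← hc]
    norm_cast
    have : 𝒜.card = ∑ r ∈ Finset.range (2*k+1), (𝒜 # r).card := by
      apply Finset.card_eq_sum_card_fiberwise (f := fun K : Finset (Fin (2*k)) => K.card)
        (t := Finset.range (2*k+1))
      intro K _
      simp only [Finset.mem_coe, Finset.mem_range]
      have := Finset.card_le_univ K
      rw [Fintype.card_fin] at this
      omega
    rw [this]
  have step1 : ∀ r ∈ Finset.range (2*k+1),
      ((𝒜 # r).card : ℚ) ≤ ((𝒜 # r).card : ℚ) / (Nat.choose (2*k) r) * (Nat.choose (2*k) k) := by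
    intro r hr
    rw [Finset.mem_range] at hr
    have hpos : (0 : ℚ) < (Nat.choose (2*k) r : ℚ) := by
      exact_mod_cast Nat.choose_pos (by omega)
    rw [div_mul_eq_mul_div, le_div_iff₀ hpos]
    have hle : (Nat.choose (2*k) r : ℚ) ≤ (Nat.choose (2*k) k : ℚ) := by
      have := Nat.choose_le_middle r (2*k)
      rw [Nat.mul_div_cancel_left k (by norm_num)] at this
      exact_mod_cast this
    exact mul_le_mul_of_nonneg_left hle (by positivity)
  have big : ∑ r ∈ Finset.range (2*k+1),
      ((𝒜 # r).card : ℚ) / (Nat.choose (2*k) r) * (Nat.choose (2*k) k)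
      ≤ (Nat.choose (2*k) k : ℚ) := by
    rw [← Finset.sum_mul]
    calc _ ≤ (1:ℚ) * (Nat.choose (2*k) k : ℚ) := by
          exact mul_le_mul_of_nonneg_right lym hM0.le
      _ = _ := one_mul _
  have hEq : ∑ r ∈ Finset.range (2*k+1), ((𝒜 # r).card : ℚ)
      = ∑ r ∈ Finset.range (2*k+1),
        ((𝒜 # r).card : ℚ) / (Nat.choose (2*k) r) * (Nat.choose (2*k) k) := by
    have h1 := Finset.sum_le_sum step1
    have h2 : ∑ r ∈ Finset.range (2*k+1),
        ((𝒜 # r).card : ℚ) / (Nat.choose (2*k) r) * (Nat.choose (2*k) k)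
        ≤ ∑ r ∈ Finset.range (2*k+1), ((𝒜 # r).card : ℚ) := by rw [hsum]; exact big
    linarith
  have termEq := (Finset.sum_eq_sum_iff_of_le step1).1 hEq
  intro K hK
  by_contra hne
  have hKn : K.card ≤ 2*k := by
    have := Finset.card_le_univ K
    rwa [Fintype.card_fin] at this
  have hr : K.card ∈ Finset.range (2*k+1) := Finset.mem_range.2 (by omega)
  have hmem : K ∈ 𝒜 # K.card := Finset.mem_slice.2 ⟨hK, rfl⟩
  have hpos : (0 : ℚ) < ((𝒜 # K.card).card : ℚ) := by
    exact_mod_cast Finset.card_pos.2 ⟨K, hmem⟩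
  have hcpos : (0 : ℚ) < (Nat.choose (2*k) (K.card) : ℚ) := by
    exact_mod_cast Nat.choose_pos (by omega)
  have heq := termEq _ hr
  rw [div_mul_eq_mul_div, eq_div_iff hcpos.ne'] at heq
  have h5 : (Nat.choose (2*k) (K.card) : ℚ) = (Nat.choose (2*k) k : ℚ) :=
    mul_left_cancel₀ hpos.ne' heq
  have : Nat.choose (2*k) (K.card) = Nat.choose (2*k) k := by exact_mod_cast h5
  exact absurd this (Nat.ne_of_lt (choose_lt_middle hKn hne))

lemma const_of_ksets {k : ℕ} (hk : 1 ≤ k) (b : Fin (2*k) → ℚ) (t : ℚ)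
    (hall : ∀ K : Finset (Fin (2*k)), K.card = k → ∑ i ∈ K, b i = t) :
    ∀ i j, b i = b j := by
  intro i j
  rcases eq_or_ne i j with rfl | hij
  · rfl
  have hcard : ((Finset.univ.erase i).erase j).card = 2*k - 2 := by
    rw [Finset.card_erase_of_mem (Finset.mem_erase.2 ⟨hij.symm, Finset.mem_univ j⟩),
      Finset.card_erase_of_mem (Finset.mem_univ i), Finset.card_univ, Fintype.card_fin]
    omega
  obtain ⟨K, hKsub, hKcard⟩ := Finset.exists_subset_card_eq
    (show k - 1 ≤ ((Finset.univ.erase i).erase j).card by omega)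
  have hiK : i ∉ K := by
    intro h
    have := hKsub h
    simp [Finset.mem_erase] at this
  have hjK : j ∉ K := by
    intro h
    have := hKsub h
    simp [Finset.mem_erase] at this
  have h1 := hall (insert i K) (by rw [Finset.card_insert_of_notMem hiK, hKcard]; omega)
  have h2 := hall (insert j K) (by rw [Finset.card_insert_of_notMem hjK, hKcard]; omega)
  rw [Finset.sum_insert hiK] at h1
  rw [Finset.sum_insert hjK] at h2
  linarith
lemma zsum_of_exists_zero {m : ℕ} (a : Fin m → ℚ) (i0 : Fin m) (hi0 : a i0 = 0) :
    zsum a = 0 := by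
  rw [zsum]
  apply Finset.sum_involution
    (g := fun J _ => if i0 ∈ J then J.erase i0 else insert i0 J)
  · intro J _
    by_cases h : i0 ∈ J
    · simp only [h, if_true]
      have hpos : 1 ≤ J.card := Finset.card_pos.2 ⟨i0, h⟩
      rw [Finset.card_erase_of_mem h]
      obtain ⟨n, hn⟩ : ∃ n, J.card = n + 1 := ⟨J.card - 1, by omega⟩
      rw [hn]
      simp [pow_succ]
    · simp only [h, if_false]
      rw [Finset.card_insert_of_notMem h]
      simp [pow_succ]
  · intro J _ _
    by_cases h : i0 ∈ J
    · simp only [h, if_true]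
      intro heq
      have := Finset.notMem_erase i0 J
      rw [heq] at this
      exact this h
    · simp only [h, if_false]
      intro heq
      have := Finset.mem_insert_self i0 J
      rw [heq] at this
      exact h this
  · intro J _
    by_cases h : i0 ∈ J
    · simp only [h, if_true, Finset.notMem_erase i0 J, if_false]
      exact Finset.insert_erase h
    · simp only [h, if_false, Finset.mem_insert_self i0 J, if_true]
      exact Finset.erase_insert h
  · intro J hJ
    simp only [Finset.mem_filter, Finset.mem_univ, true_and] at hJ ⊢
    by_cases h : i0 ∈ J
    · simp only [h, if_true]
      rwa [Finset.sum_erase _ hi0]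
    · simp only [h, if_false]
      rw [Finset.sum_insert h, hi0, zero_add]
      exact hJ

lemma neg_one_pow_le_one (n : ℕ) : (-1 : ℤ) ^ n ≤ 1 := by
  rcases neg_one_pow_eq_or ℤ n with h | h <;> rw [h] <;> norm_num

lemma zsum_le {k : ℕ} (hk : 1 ≤ k) (a : Fin (2*k) → ℚ) (ha : a ≠ 0) :
    zsum a ≤ (Nat.choose (2*k) k : ℤ) ∧
    (zsum a = (Nat.choose (2*k) k : ℤ) →
      ∃ P : Finset (Fin (2*k)), P.card = k ∧ ∃ c : ℚ, c ≠ 0 ∧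
        a = fun i => if i ∈ P then c else -c) := by
  by_cases hzero : ∃ i, a i = 0
  · obtain ⟨i0, hi0⟩ := hzero
    rw [zsum_of_exists_zero a i0 hi0]
    have hpos : 0 < Nat.choose (2*k) k := Nat.choose_pos (by omega)
    constructor
    · exact_mod_cast hpos.le
    · intro h
      exfalso
      have : (0:ℤ) < (Nat.choose (2*k) k : ℤ) := by exact_mod_cast hpos
      omega
  push_neg at hzero
  set N : Finset (Fin (2*k)) := Finset.univ.filter (fun i => a i < 0) with hN
  set b : Fin (2*k) → ℚ := fun i => if i ∈ N then -a i else a i with hb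
  have hbpos : ∀ i, 0 < b i := by
    intro i
    by_cases h : a i < 0
    · have : i ∈ N := by simp [hN, h]
      simp [hb, this]; linarith
    · have : i ∉ N := by simp [hN, h]
      simp [hb, this]
      rcases lt_or_eq_of_le (not_lt.1 h) with h' | h'
      · exact h'
      · exact absurd h'.symm (hzero i)
  set t : ℚ := ∑ i ∈ N, b i with ht
  set W : Finset (Finset (Fin (2*k))) :=
    Finset.univ.filter (fun K => ∑ i ∈ K, b i = t) with hW
  have hanti : IsAntichain (· ⊆ ·) (W : Set (Finset (Fin (2*k)))) := by
    intro K hK L hL hne hsub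
    rw [Finset.mem_coe, hW, Finset.mem_filter] at hK hL
    have hsubKL : K ⊆ L := hsub
    have hne' : (L \ K).Nonempty := by
      rw [Finset.sdiff_nonempty]
      intro hLK
      exact hne (Finset.Subset.antisymm hsubKL hLK)
    have hposs : 0 < ∑ i ∈ L \ K, b i := Finset.sum_pos (fun i _ => hbpos i) hne'
    have hsd : ∑ i ∈ L \ K, b i + ∑ i ∈ K, b i = ∑ i ∈ L, b i := Finset.sum_sdiff hsubKL
    rw [hK.2, hL.2] at hsd
    linarith
  have hWle : W.card ≤ Nat.choose (2*k) k := antichain_card_le W hanti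
  have htrans : zsum a = (-1 : ℤ) ^ N.card * ∑ K ∈ W, (-1 : ℤ) ^ K.card := by
    rw [zsum_transfer a N]
  have hle : zsum a ≤ (W.card : ℤ) := by
    rw [htrans, Finset.mul_sum]
    calc ∑ K ∈ W, (-1 : ℤ) ^ N.card * (-1) ^ K.card
        = ∑ K ∈ W, (-1 : ℤ) ^ (N.card + K.card) := by
          exact Finset.sum_congr rfl fun K _ => (pow_add _ _ _).symm
      _ ≤ ∑ _K ∈ W, (1 : ℤ) := Finset.sum_le_sum fun K _ => neg_one_pow_le_one _
      _ = (W.card : ℤ) := by simp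
  refine ⟨hle.trans (by exact_mod_cast hWle), ?_⟩
  intro heq
  have hWc : W.card = Nat.choose (2*k) k := by
    have h1 : (Nat.choose (2*k) k : ℤ) ≤ (W.card : ℤ) := heq ▸ hle
    have h2 : (W.card : ℤ) ≤ (Nat.choose (2*k) k : ℤ) := by exact_mod_cast hWle
    omega
  have hmid := antichain_eq_middle W hanti hWc
  have hWeq : W = Finset.powersetCard k Finset.univ := by
    apply Finset.eq_of_subset_of_card_le
    · intro K hK
      exact Finset.mem_powersetCard_univ.2 (hmid K hK)
    · rw [Finset.card_powersetCard, Finset.card_univ, Fintype.card_fin, hWc]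
  have hallk : ∀ K : Finset (Fin (2*k)), K.card = k → ∑ i ∈ K, b i = t := by
    intro K hK
    have : K ∈ W := hWeq ▸ Finset.mem_powersetCard_univ.2 hK
    rw [hW, Finset.mem_filter] at this
    exact this.2
  have hconst := const_of_ksets hk b t hallk
  set i0 : Fin (2*k) := ⟨0, by omega⟩ with hi0
  set c : ℚ := b i0 with hc
  have hc0 : 0 < c := hbpos i0
  have hbi : ∀ i, b i = c := fun i => hconst i i0
  obtain ⟨K0, _, hK0card⟩ := Finset.exists_subset_card_eq
    (show k ≤ (Finset.univ : Finset (Fin (2*k))).card by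
      rw [Finset.card_univ, Fintype.card_fin]; omega)
  have ht1 : t = (k : ℚ) * c := by
    rw [← hallk K0 hK0card]
    rw [Finset.sum_congr rfl fun i _ => hbi i, Finset.sum_const, hK0card, nsmul_eq_mul]
  have ht2 : t = (N.card : ℚ) * c := by
    rw [ht, Finset.sum_congr rfl fun i _ => hbi i, Finset.sum_const, nsmul_eq_mul]
  have hNcard : N.card = k := by
    have hq : (N.card : ℚ) = (k : ℚ) := mul_right_cancel₀ hc0.ne' (ht2.symm.trans ht1)
    exact_mod_cast hq
  refine ⟨Nᶜ, ?_, c, hc0.ne', ?_⟩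
  · rw [Finset.card_compl, Fintype.card_fin, hNcard]; omega
  · funext i
    by_cases h : i ∈ N
    · have h1 : i ∉ Nᶜ := by simp [h]
      have h2 : b i = -a i := by simp [hb, h]
      have h3 : b i = c := hbi i
      simp [h1]; linarith
    · have h1 : i ∈ Nᶜ := by simp [h]
      have h2 : b i = a i := by simp [hb, h]
      have h3 : b i = c := hbi i
      simp [h1]; linarith
lemma sForm_single {k : ℕ} (j : Fin (2*k)) : sForm k {j} = Pi.single j (1:ℚ) := by
  funext i
  simp only [sForm, Finset.mem_singleton, Pi.single_apply]

lemma span_eq_ker {k : ℕ} (J : Finset (Fin (2*k))) (z : Fin (2*k)) (hz : z ∈ J) :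
    Submodule.span ℚ
      ((fun j : Fin (2*k) => sForm k {j} - sForm k {z}) '' (J : Set (Fin (2*k))) ∪
        (fun j : Fin (2*k) => sForm k {j} + sForm k {z}) ''
          ((Jᶜ : Finset (Fin (2*k))) : Set (Fin (2*k)))) =
    LinearMap.ker (wt (fun i => if i ∈ J then (1:ℚ) else -1)) := by
  set ε : Fin (2*k) → ℚ := fun i => if i ∈ J then (1:ℚ) else -1 with hε
  have hεz : ε z = 1 := by simp [hε, hz]
  have hwts : ∀ j : Fin (2*k), wt ε (sForm k {j}) = ε j := by
    intro j
    rw [wt_sForm, Finset.sum_singleton]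
  apply le_antisymm
  · rw [Submodule.span_le]
    rintro x (⟨j, hj, rfl⟩ | ⟨j, hj, rfl⟩)
    · rw [SetLike.mem_coe, LinearMap.mem_ker, map_sub, hwts, hwts, hεz]
      have hj' : j ∈ J := hj
      have : ε j = 1 := by simp [hε, hj']
      rw [this, sub_self]
    · rw [SetLike.mem_coe, LinearMap.mem_ker, map_add, hwts, hwts, hεz]
      have hj' : j ∉ J := by simpa using hj
      have : ε j = -1 := by simp [hε, hj']
      rw [this]; ring
  · intro x hx
    rw [LinearMap.mem_ker, wt_apply] at hx
    have key : ∑ j, x j • (sForm k {j} - ε j • sForm k {z}) = x := by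
      funext i
      rw [Finset.sum_apply]
      have : ∀ j, (x j • (sForm k {j} - ε j • sForm k {z})) i
          = x j * (if i = j then 1 else 0) - x j * ε j * (if i = z then 1 else 0) := by
        intro j
        simp only [Pi.smul_apply, Pi.sub_apply, sForm, Finset.mem_singleton, smul_eq_mul]
        ring
      rw [Finset.sum_congr rfl fun j _ => this j, Finset.sum_sub_distrib]
      have hx' : ∑ j, x j * ε j = 0 := by
        rw [← hx]; exact Finset.sum_congr rfl fun j _ => mul_comm _ _
      have e1 : ∑ j, x j * (if i = j then 1 else 0) = x i := by simp
      have e2 : ∑ j, x j * ε j * (if i = z then (1:ℚ) else 0)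
          = (∑ j, x j * ε j) * (if i = z then 1 else 0) := (Finset.sum_mul _ _ _).symm
      rw [e1, e2, hx', zero_mul, sub_zero]
    rw [← key]
    apply Submodule.sum_mem
    intro j _
    apply Submodule.smul_mem
    by_cases hj : j ∈ J
    · have : ε j = 1 := by simp [hε, hj]
      rw [this, one_smul]
      exact Submodule.subset_span (Or.inl ⟨j, by simpa using hj, rfl⟩)
    · have : ε j = -1 := by simp [hε, hj]
      rw [this, neg_smul, one_smul, sub_neg_eq_add]
      exact Submodule.subset_span (Or.inr ⟨j, by simpa using hj, rfl⟩)

lemma zsum_eps {k : ℕ} (J : Finset (Fin (2*k))) (hJ : J.card = k) :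
    zsum (fun i => if i ∈ J then (1:ℚ) else -1) = (Nat.choose (2*k) k : ℤ) := by
  set ε : Fin (2*k) → ℚ := fun i => if i ∈ J then (1:ℚ) else -1 with hε
  have hJc : (Jᶜ : Finset (Fin (2*k))).card = k := by
    rw [Finset.card_compl, Fintype.card_fin, hJ]; omega
  rw [zsum_transfer ε Jᶜ]
  have hb : ∀ i : Fin (2*k), (if i ∈ Jᶜ then -(ε i) else ε i) = 1 := by
    intro i
    by_cases h : i ∈ J <;> simp [hε, h]
  have hcond : ∀ K : Finset (Fin (2*k)),
      (∑ i ∈ K, (if i ∈ Jᶜ then -(ε i) else ε i)) = (K.card : ℚ) := by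
    intro K
    rw [Finset.sum_congr rfl fun i _ => hb i, Finset.sum_const, nsmul_eq_mul, mul_one]
  have hfilter : Finset.univ.filter (fun K : Finset (Fin (2*k)) =>
        (∑ i ∈ K, (if i ∈ Jᶜ then -(ε i) else ε i))
          = ∑ i ∈ Jᶜ, (if i ∈ Jᶜ then -(ε i) else ε i))
      = Finset.powersetCard k Finset.univ := by
    ext K
    rw [Finset.mem_filter, hcond, hcond, hJc, Finset.mem_powersetCard_univ]
    simp only [Finset.mem_univ, true_and]
    exact_mod_cast Nat.cast_inj
  rw [hfilter]
  have : ∑ K ∈ Finset.powersetCard k (Finset.univ : Finset (Fin (2*k))), (-1:ℤ) ^ K.card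
      = (Nat.choose (2*k) k : ℤ) * (-1) ^ k := by
    rw [Finset.sum_congr rfl fun K hK => by rw [Finset.mem_powersetCard_univ.1 hK],
      Finset.sum_const, Finset.card_powersetCard, Finset.card_univ, Fintype.card_fin,
      nsmul_eq_mul]
  rw [this, hJc]
  have h1 : (-1:ℤ) ^ k * (-1) ^ k = 1 := by
    rw [← pow_add]
    exact Even.neg_one_pow ⟨k, rfl⟩
  calc (-1:ℤ) ^ k * ((Nat.choose (2*k) k : ℤ) * (-1) ^ k)
      = ((-1:ℤ) ^ k * (-1) ^ k) * (Nat.choose (2*k) k : ℤ) := by ring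
    _ = (Nat.choose (2*k) k : ℤ) := by rw [h1, one_mul]
lemma wt_smul {m : ℕ} (c : ℚ) (a : Fin m → ℚ) : wt (c • a) = c • wt a := by
  apply LinearMap.ext
  intro x
  rw [wt_apply, LinearMap.smul_apply, wt_apply, Finset.smul_sum]
  exact Finset.sum_congr rfl fun i _ => by simp [mul_assoc]

lemma sum_single_eq {m : ℕ} (x : Fin m → ℚ) :
    ∑ i, x i • (Pi.single i (1:ℚ) : Fin m → ℚ) = x := by
  have h : ∀ i, x i • (Pi.single i (1:ℚ) : Fin m → ℚ) = Pi.single i (x i) := by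
    intro i
    rw [← Pi.single_smul, smul_eq_mul, mul_one]
  rw [Finset.sum_congr rfl fun i _ => h i]
  exact Finset.univ_sum_single x

lemma exists_wt {k : ℕ} (V : Submodule ℚ (Fin (2*k) → ℚ))
    (hdim : Module.finrank ℚ V = 2*k - 1) (hk : 1 ≤ k) :
    ∃ a : Fin (2*k) → ℚ, V = LinearMap.ker (wt a) := by
  have hfin : Module.finrank ℚ (Fin (2*k) → ℚ) = 2*k := by
    rw [Module.finrank_pi, Fintype.card_fin]
  have hq : Module.finrank ℚ ((Fin (2*k) → ℚ) ⧸ V) = 1 := by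
    have := Submodule.finrank_quotient_add_finrank V
    rw [hfin] at this
    omega
  let bq := Module.finBasisOfFinrankEq ℚ ((Fin (2*k) → ℚ) ⧸ V) hq
  let φ : (Fin (2*k) → ℚ) →ₗ[ℚ] ℚ :=
    (LinearMap.proj (0 : Fin 1)).comp (bq.equivFun.toLinearMap.comp V.mkQ)
  have hker : V = LinearMap.ker φ := by
    ext x
    rw [LinearMap.mem_ker]
    constructor
    · intro hx
      have h0 : V.mkQ x = 0 := by
        rwa [← LinearMap.mem_ker, Submodule.ker_mkQ]
      simp [φ, h0]
    · intro hx
      have h1 : bq.equivFun (V.mkQ x) = 0 := by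
        funext i
        have hi : i = 0 := Subsingleton.elim i 0
        rw [hi]
        exact hx
      have h2 : V.mkQ x = 0 := by
        have := bq.equivFun.injective (by rw [h1, map_zero] : bq.equivFun (V.mkQ x) = bq.equivFun 0)
        exact this
      rwa [← Submodule.ker_mkQ (p := V), LinearMap.mem_ker]
  refine ⟨fun i => φ (sForm k {i}), ?_⟩
  have hφ : wt (fun i => φ (sForm k {i})) = φ := by
    apply LinearMap.ext
    intro x
    rw [wt_apply]
    conv_rhs => rw [show x = ∑ i, x i • sForm k {i} by
      rw [Finset.sum_congr rfl fun i _ => by rw [sForm_single i]]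
      exact (sum_single_eq x).symm]
    rw [map_sum]
    exact Finset.sum_congr rfl fun i _ => by rw [map_smul, smul_eq_mul, mul_comm]
  rw [hφ]
  exact hker
end FormSumAux
open FormSumAux

/-- Let `k ≥ 1` and let `V ⊆ W_k` be a ℚ-subspace containing `s_{[2k]}`, with
`dim V = 2k − 1`. Then `𝒜(V) − dim V ≤ binom(2k,k) − 2k`, with equality if and only if
there is `J ⊆ [2k]` with `#J = k` and `1 ∈ J` (the first index) such that
`V = Span_ℚ({s_j − s_1 : j ∈ J} ∪ {s_j + s_1 : j ∈ [2k] \ J})`. -/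
theorem formSum_dim_codim_one (k : ℕ) (hk : 1 ≤ k) (V : Submodule ℚ (Fin (2 * k) → ℚ))
    (hV : sForm k Finset.univ ∈ V)
    (hdim : (Module.finrank ℚ V : ℤ) = 2 * k - 1) :
    formSum k V - (Module.finrank ℚ V : ℤ) ≤ (Nat.choose (2 * k) k : ℤ) - 2 * k ∧
    (formSum k V - (Module.finrank ℚ V : ℤ) = (Nat.choose (2 * k) k : ℤ) - 2 * k ↔
      ∃ J : Finset (Fin (2 * k)), J.card = k ∧ (⟨0, by omega⟩ : Fin (2 * k)) ∈ J ∧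
        V = Submodule.span ℚ
          ((fun j : Fin (2 * k) => sForm k {j} - sForm k {(⟨0, by omega⟩ : Fin (2 * k))}) ''
              (J : Set (Fin (2 * k))) ∪
            (fun j : Fin (2 * k) => sForm k {j} + sForm k {(⟨0, by omega⟩ : Fin (2 * k))}) ''
              ((Jᶜ : Finset (Fin (2 * k))) : Set (Fin (2 * k))))) := by
  classical
  have hdimN : Module.finrank ℚ V = 2 * k - 1 := by omega
  obtain ⟨a, hVa⟩ := exists_wt V hdimN hk
  have hane : a ≠ 0 := by
    intro h
    rw [h] at hVa
    have hwt0 : wt (0 : Fin (2 * k) → ℚ) = 0 := by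
      apply LinearMap.ext; intro x; rw [wt_apply]; simp
    rw [hwt0, LinearMap.ker_zero] at hVa
    have : Module.finrank ℚ V = 2 * k := by
      rw [hVa, finrank_top, Module.finrank_pi, Fintype.card_fin]
    omega
  have hform : formSum k V = zsum a - 1 := by rw [hVa]; exact formSum_ker k a
  obtain ⟨hle, heqc⟩ := zsum_le hk a hane
  constructor
  · rw [hform, hdim]
    linarith [hle]
  · rw [hform, hdim]
    constructor
    · intro h
      have hzc : zsum a = (Nat.choose (2 * k) k : ℤ) := by linarith
      obtain ⟨P, hPcard, c, hc0, hac⟩ := heqc hzc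
      by_cases hzP : (⟨0, by omega⟩ : Fin (2 * k)) ∈ P
      · refine ⟨P, hPcard, hzP, ?_⟩
        rw [span_eq_ker P _ hzP, hVa]
        have ha' : a = c • (fun i => if i ∈ P then (1 : ℚ) else -1) := by
          rw [hac]
          funext i
          by_cases h' : i ∈ P <;> simp [h']
        rw [ha', wt_smul, LinearMap.ker_smul _ c hc0]
      · have hzPc : (⟨0, by omega⟩ : Fin (2 * k)) ∈ Pᶜ := by simpa using hzP
        refine ⟨Pᶜ, ?_, hzPc, ?_⟩
        · rw [Finset.card_compl, Fintype.card_fin, hPcard]; omega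
        · rw [span_eq_ker Pᶜ _ hzPc, hVa]
          have ha' : a = (-c) • (fun i => if i ∈ Pᶜ then (1 : ℚ) else -1) := by
            rw [hac]
            funext i
            by_cases h' : i ∈ P
            · have h'' : i ∉ Pᶜ := by simp [h']
              simp [h', h'']
            · have h'' : i ∈ Pᶜ := by simp [h']
              simp [h', h'']
          rw [ha', wt_smul, LinearMap.ker_smul _ (-c) (neg_ne_zero.2 hc0)]
    · rintro ⟨J, hJk, hzJ, hVs⟩
      have hVk : V = LinearMap.ker (wt (fun i => if i ∈ J then (1 : ℚ) else -1)) :=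
        hVs.trans (span_eq_ker J _ hzJ)
      have e1 : formSum k V = zsum (fun i => if i ∈ J then (1 : ℚ) else -1) - 1 := by
        rw [hVk]; exact formSum_ker k _
      rw [zsum_eps J hJk] at e1
      rw [← hform] at *
      rw [e1]
      ring
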